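/- Let Φ be an irreducible reduced root system with base Π, J ⊆ Π, π the projection modulo ⟨Π∖J⟩. Let ã be the highest root of Φ and a₁, …, a_n ∈ Φ⁺ a sequence of positive roots with π(a_i) ≠ 0 such that each difference ã − a₁ − ⋯ − a_i is a root, and b = ã − a₁ − ⋯ − a_n is a Π-minimal root in π⁻¹(π(b)) with π(b) ≠ 0. Then for any root a₀ with π(a₀) = π(ã) in the same irreducible component of Φ as ã, there exist positive roots a'_i with π(a'_i) = π(a_i) such that a₀ − a'₁ − ⋯ − a'_n = b and every partial difference a₀ − a'₁ − ⋯ − a'_i is a root. -/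

import Mathlib

open scoped RealInnerProductSpace

/-- A reduced root system `Φ` with a fixed base (system of simple roots) `base`
in a real inner product space. -/
structure RootSystemData (V : Type) [NormedAddCommGroup V] [InnerProductSpace ℝ V] where
  Φ : Set V
  base : Finset V
  finite : Φ.Finite
  zero_notMem : (0:V) ∉ Φ
  neg_mem : ∀ a ∈ Φ, -a ∈ Φ
  reduced : ∀ a ∈ Φ, ∀ t : ℝ, t • a ∈ Φ → t = 1 ∨ t = -1
  reflect_mem : ∀ a ∈ Φ, ∀ b ∈ Φ, b - (2 * (inner ℝ a b : ℝ) / (inner ℝ a a : ℝ)) • a ∈ Φ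
  cartan_int : ∀ a ∈ Φ, ∀ b ∈ Φ, ∃ n : ℤ, 2 * (inner ℝ a b : ℝ) / (inner ℝ a a : ℝ) = (n : ℝ)
  base_sub : ↑base ⊆ Φ
  base_indep : LinearIndependent ℝ (fun b : base => (b : V))
  base_gen : ∀ a ∈ Φ,
    (∃ c : V → ℕ, a = ∑ b ∈ base, c b • b) ∨ (∃ c : V → ℕ, -a = ∑ b ∈ base, c b • b)

namespace RootSystemData

variable {V : Type} [NormedAddCommGroup V] [InnerProductSpace ℝ V] (RS : RootSystemData V)

/-- `a` is a nonnegative integral combination of the simple roots. -/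
def IsPos (a : V) : Prop := ∃ c : V → ℕ, a = ∑ b ∈ RS.base, c b • b

/-- The quotient space `V / ⟨Π ∖ J⟩`, ambient space of the relative roots. -/
abbrev Qspace (J : Finset V) : Type :=
  V ⧸ Submodule.span ℝ ((RS.base : Set V) \ (J : Set V))

/-- The canonical projection `π : V → V / ⟨Π ∖ J⟩`. -/
def proj (J : Finset V) : V →ₗ[ℝ] RS.Qspace J :=
  Submodule.mkQ _

/-- The set of relative roots `Φ_J = π(Φ) ∖ {0}`. -/
def relRoots (J : Finset V) : Set (RS.Qspace J) := (RS.proj J '' RS.Φ) \ {0}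

/-- `β` is a simple relative root: a nonzero image of a simple root in `J`. -/
def IsSimpleRel (J : Finset V) (β : RS.Qspace J) : Prop :=
  β ≠ 0 ∧ ∃ b ∈ J, β = RS.proj J b

/-- `β` is a positive relative root: a relative root that is a nonnegative
integral combination of the simple relative roots. -/
def IsPosRel (J : Finset V) (β : RS.Qspace J) : Prop :=
  β ∈ RS.relRoots J ∧ ∃ c : V → ℕ, β = ∑ b ∈ J, c b • RS.proj J b

/-- `a` is maximal in `S` with respect to the base `Π`. -/
def IsMaximalIn (S : Set V) (a : V) : Prop := a ∈ S ∧ ∀ b ∈ RS.base, a + b ∉ S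

/-- `a` is minimal in `S` with respect to the base `Π`. -/
def IsMinimalIn (S : Set V) (a : V) : Prop := a ∈ S ∧ ∀ b ∈ RS.base, a - b ∉ S

/-- `a` is the highest root: every root is obtained from it by subtracting a
nonnegative combination of simple roots. -/
def IsHighest (a : V) : Prop :=
  a ∈ RS.Φ ∧ ∀ b ∈ RS.Φ, ∃ c : V → ℕ, a - b = ∑ x ∈ RS.base, c x • x

/-- `S` is an irreducible component of `Φ`: a nonempty subset orthogonal to its
complement admitting no further nontrivial orthogonal splitting. -/
def IsComponent (S : Set V) : Prop :=
  S ⊆ RS.Φ ∧ S.Nonempty ∧ (∀ a ∈ S, ∀ b ∈ RS.Φ \ S, (inner ℝ a b : ℝ) = 0) ∧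
    ∀ T ⊆ S, T.Nonempty → (∀ a ∈ T, ∀ b ∈ RS.Φ \ T, (inner ℝ a b : ℝ) = 0) → T = S

/-- The root system is irreducible. -/
def Irred : Prop := RS.IsComponent RS.Φ

end RootSystemData

section Aux

variable {V : Type} [NormedAddCommGroup V] [InnerProductSpace ℝ V] (RS : RootSystemData V)

open RootSystemData Finset

theorem inner_self_pos' {x : V} (hx : x ≠ 0) : 0 < ⟪x, x⟫ := by
  rcases (real_inner_self_nonneg (x := x)).lt_or_eq with h | h
  · exact h
  · exact absurd (real_inner_self_nonpos.1 h.ge) hx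

/-- If `a, b` are roots, `a ≠ b`, and `⟪a,b⟫ > 0`, then `a - b` is a root. -/
theorem RootSystemData.sub_mem_of_inner_pos {a b : V} (hA : a ∈ RS.Φ) (hB : b ∈ RS.Φ)
    (hne : a ≠ b) (hpos : 0 < ⟪a, b⟫) : a - b ∈ RS.Φ := by
  have ha0 : a ≠ 0 := fun h => RS.zero_notMem (h ▸ hA)
  have hb0 : b ≠ 0 := fun h => RS.zero_notMem (h ▸ hB)
  have haa : (0:ℝ) < ⟪a, a⟫ := inner_self_pos' ha0
  have hbb : (0:ℝ) < ⟪b, b⟫ := inner_self_pos' hb0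
  have hba : ⟪b, a⟫ = ⟪a, b⟫ := real_inner_comm a b
  obtain ⟨q, hq⟩ := RS.cartan_int a hA b hB
  obtain ⟨p, hp⟩ := RS.cartan_int b hB a hA
  have hq1 : (1:ℤ) ≤ q := by
    have h0 : (0:ℝ) < (q:ℝ) := by rw [← hq]; positivity
    have : (0:ℤ) < q := by exact_mod_cast h0
    omega
  have hp1 : (1:ℤ) ≤ p := by
    have h0 : (0:ℝ) < (p:ℝ) := by rw [← hp]; rw [hba]; positivity
    have : (0:ℤ) < p := by exact_mod_cast h0
    omega
  have key : q = 1 ∨ p = 1 := by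
    by_contra h
    push_neg at h
    have hq2 : (2:ℝ) ≤ (q:ℝ) := by exact_mod_cast (by omega : (2:ℤ) ≤ q)
    have hp2 : (2:ℝ) ≤ (p:ℝ) := by exact_mod_cast (by omega : (2:ℤ) ≤ p)
    rw [← hq] at hq2
    rw [← hp, hba] at hp2
    have h1 : ⟪a, a⟫ ≤ ⟪a, b⟫ := by
      have := (le_div_iff₀ haa).1 hq2
      linarith
    have h2 : ⟪b, b⟫ ≤ ⟪a, b⟫ := by
      have := (le_div_iff₀ hbb).1 hp2
      linarith
    have hle : ⟪a - b, a - b⟫ ≤ 0 := by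
      rw [inner_sub_sub_self]
      linarith
    have : a - b = 0 := real_inner_self_nonpos.1 hle
    exact hne (sub_eq_zero.1 this)
  rcases key with hq1' | hp1'
  · have := RS.reflect_mem a hA b hB
    rw [show (inner ℝ a b : ℝ) = ⟪a,b⟫ from rfl] at this
    rw [hq, hq1'] at this
    simp only [Int.cast_one, one_smul] at this
    have := RS.neg_mem _ this
    simpa using this
  · have := RS.reflect_mem b hB a hA
    rw [hp, hp1'] at this
    simp only [Int.cast_one, one_smul] at this
    simpa using this

theorem RootSystemData.inner_nonpos_of_sub_notMem {a b : V} (hA : a ∈ RS.Φ) (hB : b ∈ RS.Φ)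
    (hne : a ≠ b) (hnm : a - b ∉ RS.Φ) : ⟪a, b⟫ ≤ 0 := by
  by_contra h
  exact hnm (RS.sub_mem_of_inner_pos hA hB hne (lt_of_not_ge h))

end Aux
section Aux2

variable {V : Type} [NormedAddCommGroup V] [InnerProductSpace ℝ V] (RS : RootSystemData V)

open RootSystemData Finset

/-- Key string lemma: if `x - c ∉ Φ` and `y - c ∉ Φ` then `x + y - c ∉ Φ`. -/
theorem RootSystemData.sumstring {c x y : V} (hc : c ∈ RS.Φ) (hx : x ∈ RS.Φ) (hy : y ∈ RS.Φ)
    (hxc : x ≠ c) (hyc : y ≠ c) (hxy : x + y ≠ 0)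
    (hxcn : x - c ∉ RS.Φ) (hycn : y - c ∉ RS.Φ) : x + y - c ∉ RS.Φ := by
  intro hg
  set g := x + y - c with hgdef
  have h1 : ⟪x, c⟫ ≤ 0 := RS.inner_nonpos_of_sub_notMem hx hc hxc hxcn
  have h2 : ⟪y, c⟫ ≤ 0 := RS.inner_nonpos_of_sub_notMem hy hc hyc hycn
  have h3 : ⟪g, x⟫ ≤ 0 := by
    refine RS.inner_nonpos_of_sub_notMem hg hx ?_ ?_
    · intro h; apply hyc; have : y - c = 0 := by rw [hgdef] at h; abel_nf at h ⊢; linear_combination (norm := abel) h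
      exact sub_eq_zero.1 this
    · have : g - x = y - c := by rw [hgdef]; abel
      rw [this]; exact hycn
  have h4 : ⟪g, y⟫ ≤ 0 := by
    refine RS.inner_nonpos_of_sub_notMem hg hy ?_ ?_
    · intro h; apply hxc; have : x - c = 0 := by rw [hgdef] at h; linear_combination (norm := abel) h
      exact sub_eq_zero.1 this
    · have : g - y = x - c := by rw [hgdef]; abel
      rw [this]; exact hxcn
  have hw : ⟪x + y, x + y⟫ ≤ 0 := by
    have hsplit : (x + y : V) = g + c := by rw [hgdef]; abel
    have e1 : ⟪g, x + y⟫ = ⟪g, x⟫ + ⟪g, y⟫ := inner_add_right g x y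
    have e2 : ⟪c, x + y⟫ = ⟪c, x⟫ + ⟪c, y⟫ := inner_add_right c x y
    have e3 : ⟪x + y, x + y⟫ = ⟪g, x + y⟫ + ⟪c, x + y⟫ := by
      rw [hsplit]; exact inner_add_left g c _
    have hc1 : ⟪c, x⟫ = ⟪x, c⟫ := real_inner_comm x c
    have hc2 : ⟪c, y⟫ = ⟪y, c⟫ := real_inner_comm y c
    rw [e3, e1, e2, hc1, hc2]
    linarith
  exact hxy (real_inner_self_nonpos.1 hw)

/-- Strings go down one step at a time. -/
theorem RootSystemData.downstring {c β : V} (hc : c ∈ RS.Φ) (hβ : β ∈ RS.Φ) (hβc : β ≠ c) :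
    ∀ k : ℕ, 1 ≤ k → β - (k:ℤ) • c ∈ RS.Φ → β - c ∈ RS.Φ := by
  intro k
  induction k with
  | zero => intro h; omega
  | succ k ih =>
    intro _ hmem
    rcases Nat.eq_zero_or_pos k with hk0 | hk1
    · subst hk0; simpa using hmem
    by_contra hnc
    have hcβ : ⟪β, c⟫ ≤ 0 := RS.inner_nonpos_of_sub_notMem hβ hc hβc hnc
    have hc0 : c ≠ 0 := fun h => RS.zero_notMem (h ▸ hc)
    have hcc : (0:ℝ) < ⟪c, c⟫ := inner_self_pos' hc0
    -- γ = β - (k+1)c ; show γ + c ∈ Φ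
    set γ := β - ((k:ℤ)+1) • c with hγdef
    have hγmem : γ ∈ RS.Φ := by rw [hγdef]; exact_mod_cast hmem
    have hγne : γ ≠ -c := by
      intro h
      have : β = (k:ℤ) • c := by
        rw [hγdef] at h
        have := sub_eq_iff_eq_add.1 h
        rw [this]; push_cast; module
      have hR : β = ((k:ℕ):ℝ) • c := by
        rw [this, ← Int.cast_smul_eq_zsmul ℝ]; norm_num
      have hred := RS.reduced c hc ((k:ℕ):ℝ) (hR ▸ hβ)
      rcases hred with h1 | h1
      · have : (k:ℤ) = 1 := by exact_mod_cast h1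
        apply hβc; rw [‹β = (k:ℤ) • c›, this]; simp
      · have : (k:ℤ) = -1 := by exact_mod_cast h1
        omega
    have hinner : 0 < ⟪γ, -c⟫ := by
      have e : ⟪γ, c⟫ = ⟪β, c⟫ - ((k:ℝ)+1) * ⟪c, c⟫ := by
        rw [hγdef, inner_sub_left]
        congr 1
        rw [← Int.cast_smul_eq_zsmul ℝ, real_inner_smul_left]
        push_cast; ring
      rw [inner_neg_right]
      have hk1' : (1:ℝ) ≤ (k:ℝ) := by exact_mod_cast hk1
      nlinarith
    have := RS.sub_mem_of_inner_pos hγmem (RS.neg_mem c hc) (by simpa using hγne) hinner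
    have hmem' : β - (k:ℤ) • c ∈ RS.Φ := by
      have e : γ - -c = β - (k:ℤ) • c := by rw [hγdef]; push_cast; module
      rwa [e] at this
    exact hnc (ih hk1 hmem')

/-- Root strings are unbroken. -/
theorem RootSystemData.unbroken {c β : V} (hc : c ∈ RS.Φ) (hβ : β ∈ RS.Φ) (hβc : β ≠ c) :
    ∀ m : ℕ, β - (m:ℤ) • c ∈ RS.Φ → ∀ j : ℕ, j ≤ m → β - (j:ℤ) • c ∈ RS.Φ := by
  intro m
  induction m generalizing β with
  | zero => intro h j hj; interval_cases j; simpa using hβ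
  | succ m ih =>
    intro hmem j hj
    rcases Nat.eq_zero_or_pos j with hj0 | hj1
    · subst hj0; simpa using hβ
    have h1 : β - c ∈ RS.Φ := RS.downstring hc hβ hβc (m+1) (by omega) (by exact_mod_cast hmem)
    have hβ'c : β - c ≠ c := by
      intro h
      have h2 : β = (2:ℝ) • c := by
        have := sub_eq_iff_eq_add.1 h
        rw [this]; module
      rcases RS.reduced c hc 2 (h2 ▸ hβ) with h3 | h3 <;> norm_num at h3
    have hmem' : (β - c) - (m:ℤ) • c ∈ RS.Φ := by
      have e : (β - c) - (m:ℤ) • c = β - ((m:ℤ)+1) • c := by push_cast; module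
      rw [e]; exact_mod_cast hmem
    have := ih h1 hβ'c hmem' (j-1) (by omega)
    have e : (β - c) - ((j-1:ℕ):ℤ) • c = β - (j:ℤ) • c := by
      have : ((j-1:ℕ):ℤ) = (j:ℤ) - 1 := by omega
      rw [this]; push_cast; module
    rwa [e] at this

end Aux2
section Aux3

variable {V : Type} [NormedAddCommGroup V] [InnerProductSpace ℝ V] (RS : RootSystemData V)

open RootSystemData Finset

/-- Decomposition of shifts along a `c`-string across a sum of two roots. -/
theorem RootSystemData.substring {c r1 s0 : V} (hc : c ∈ RS.Φ) (hr1 : r1 ∈ RS.Φ)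
    (hs0 : s0 ∈ RS.Φ) (hsm : ∀ μ : ℤ, s0 ≠ μ • c) :
    ∀ k : ℕ, (∀ j : ℕ, j ≤ k → r1 + s0 - (j:ℤ) • c ∈ RS.Φ) →
    ∃ k₁ k₂ : ℤ, 0 ≤ k₁ ∧ k₁ + k₂ = (k:ℤ) ∧ r1 - k₁ • c ∈ RS.Φ ∧ s0 - k₂ • c ∈ RS.Φ := by
  intro k
  induction k with
  | zero =>
    intro _
    exact ⟨0, 0, le_refl _, by omega, by simpa using hr1, by simpa using hs0⟩
  | succ k ih =>
    intro hlev
    obtain ⟨k₁, k₂, hk₁, hsum, hx, hy⟩ := ih (fun j hj => hlev j (by omega))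
    set x := r1 - k₁ • c with hxdef
    set y := s0 - k₂ • c with hydef
    have hw' : x + y - c ∈ RS.Φ := by
      have e : x + y - c = r1 + s0 - (((k:ℕ)+1:ℕ):ℤ) • c := by
        rw [hxdef, hydef]; push_cast; rw [← hsum]; module
      rw [e]; exact hlev (k+1) (le_refl _)
    by_cases hxc : x - c ∈ RS.Φ
    · refine ⟨k₁ + 1, k₂, by omega, by omega, ?_, hy⟩
      have e : r1 - (k₁ + 1) • c = x - c := by rw [hxdef]; module
      rwa [e]
    by_cases hyc : y - c ∈ RS.Φ
    · refine ⟨k₁, k₂ + 1, hk₁, by omega, hx, ?_⟩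
      have e : s0 - (k₂ + 1) • c = y - c := by rw [hydef]; module
      rwa [e]
    -- degenerate analysis via sumstring
    have hyne : y ≠ c := by
      intro h
      exact hsm (k₂ + 1) (by rw [hydef] at h; have := sub_eq_iff_eq_add.1 h; rw [this]; module)
    have hxyne : x + y ≠ 0 := by
      intro h
      apply RS.zero_notMem
      have e : x + y = r1 + s0 - (k:ℤ) • c := by rw [hxdef, hydef, ← hsum]; module
      rw [← h, e]; exact hlev k (by omega)
    have hxeq : x = c := by
      by_contra hxne
      exact (RS.sumstring hc hx hy hxne hyne hxyne hxc hyc) hw'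
    -- then r1 = (k₁+1) • c, so k₁ = 0 and r1 = c
    have hr1eq : r1 = (k₁ + 1) • c := by
      rw [hxdef] at hxeq
      have := sub_eq_iff_eq_add.1 hxeq
      rw [this]; module
    have hr1c : r1 = c ∧ k₁ = 0 := by
      have hcast : r1 = ((k₁ + 1 : ℤ):ℝ) • c := by
        rw [hr1eq, ← Int.cast_smul_eq_zsmul ℝ]
      rcases RS.reduced c hc _ (hcast ▸ hr1) with h1 | h1
      · have : k₁ + 1 = 1 := by exact_mod_cast h1
        have hk0 : k₁ = 0 := by omega
        exact ⟨by rw [hr1eq, hk0]; simp, hk0⟩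
      · have : k₁ + 1 = -1 := by exact_mod_cast h1
        omega
    refine ⟨2, (k:ℤ) - 1, by norm_num, by omega, ?_, ?_⟩
    · have e : r1 - (2:ℤ) • c = -c := by rw [hr1c.1]; module
      rw [e]; exact RS.neg_mem c hc
    · have e : s0 - ((k:ℤ) - 1) • c = r1 + s0 - (k:ℤ) • c := by rw [hr1c.1]; module
      rw [e]; exact hlev k (by omega)

end Aux3
section Aux4

variable {V : Type} [NormedAddCommGroup V] [InnerProductSpace ℝ V] (RS : RootSystemData V)

open RootSystemData Finset

/-- The main path-shifting lemma: a path of roots from `r 0` down to `r n` along steps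
`s t` (none of which is a multiple of `c`), where `r n - c` is not a root, can be shifted
to a path starting at `r 0 - k • c`. -/
theorem RootSystemData.pathshift {c : V} (hc : c ∈ RS.Φ) :
    ∀ n : ℕ, ∀ r s : ℕ → V, ∀ k : ℕ,
    (∀ i ≤ n, r i ∈ RS.Φ) →
    (∀ t < n, s t ∈ RS.Φ ∧ (∀ μ : ℤ, s t ≠ μ • c) ∧ r (t+1) = r t - s t) →
    r n - c ∉ RS.Φ → r n ≠ c → r 0 - (k:ℤ) • c ∈ RS.Φ →
    ∃ s' : ℕ → V, (∀ t < n, s' t ∈ RS.Φ ∧ ∃ μ : ℤ, s' t = s t + μ • c) ∧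
      (∀ i ≤ n, r 0 - (k:ℤ) • c - ∑ t ∈ Finset.range i, s' t ∈ RS.Φ) ∧
      (r 0 - (k:ℤ) • c - ∑ t ∈ Finset.range n, s' t = r n) := by
  intro n
  induction n with
  | zero =>
    intro r s k hr hs hend hendc hz
    rcases Nat.eq_zero_or_pos k with hk0 | hk1
    · subst hk0
      exact ⟨s, by omega, fun i hi => by interval_cases i; simpa using hr 0 (le_refl _),
        by simpa using hr 0 (le_refl _)⟩
    · exact absurd (RS.downstring hc (hr 0 (le_refl _)) hendc k hk1 hz) hend
  | succ n ih =>
    intro r s k hr hs hend hendc hz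
    rcases Nat.eq_zero_or_pos k with hk0 | hk1
    · subst hk0
      have hri : ∀ i, i ≤ n+1 → r i = r 0 - ∑ t ∈ Finset.range i, s t := by
        intro i
        induction i with
        | zero => simp
        | succ i ih2 =>
          intro hi
          rw [Finset.sum_range_succ, (hs i (by omega)).2.2, ih2 (by omega)]
          abel
      refine ⟨s, fun t ht => ⟨(hs t ht).1, 0, by simp⟩, fun i hi => ?_, ?_⟩
      · have := hr i hi
        rw [hri i hi] at this
        simpa using this
      · rw [hri (n+1) (le_refl _)]; simp
    -- k ≥ 1
    have hr0 : r 0 ∈ RS.Φ := hr 0 (by omega)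
    have hr1m : r 1 ∈ RS.Φ := hr 1 (by omega)
    have hs0 := hs 0 (by omega)
    have hstep0 : r 1 = r 0 - s 0 := hs0.2.2
    -- produce first new step w and tail shift k'
    have key : ∃ (k' : ℕ) (w : V), w ∈ RS.Φ ∧ (∃ μ : ℤ, w = s 0 + μ • c) ∧
        r 0 - (k:ℤ) • c - w = r 1 - ((k':ℕ):ℤ) • c ∧ r 1 - ((k':ℕ):ℤ) • c ∈ RS.Φ := by
      by_cases hr0c : r 0 = c
      · -- degenerate: r 0 = c, k = 2
        have hzc : r 0 - (k:ℤ) • c = ((1 - (k:ℤ) : ℤ):ℝ) • c := by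
          rw [hr0c, Int.cast_smul_eq_zsmul]; push_cast; module
        have hk2 : k = 2 := by
          rcases RS.reduced c hc _ (hzc ▸ hz) with h1 | h1
          · have : (1:ℤ) - k = 1 := by exact_mod_cast h1
            omega
          · have : (1:ℤ) - k = -1 := by exact_mod_cast h1
            omega
        refine ⟨1, s 0 - c, ?_, ⟨-1, by module⟩, ?_, ?_⟩
        · have e : s 0 - c = -(r 1) := by rw [hstep0, hr0c]; abel
          rw [e]; exact RS.neg_mem _ hr1m
        · subst hk2; rw [hstep0, hr0c]; push_cast; module
        · have e : r 1 - ((1:ℕ):ℤ) • c = -(s 0) := by rw [hstep0, hr0c]; push_cast; module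
          rw [e]; exact RS.neg_mem _ hs0.1
      · -- generic: use unbroken strings and the decomposition lemma
        have hlev : ∀ j : ℕ, j ≤ k → r 1 + s 0 - (j:ℤ) • c ∈ RS.Φ := by
          intro j hj
          have e : r 1 + s 0 - (j:ℤ) • c = r 0 - (j:ℤ) • c := by rw [hstep0]; abel
          rw [e]
          exact RS.unbroken hc hr0 hr0c k hz j hj
        obtain ⟨k₁, k₂, hk₁, hsum, hx, hy⟩ := RS.substring hc hr1m hs0.1 hs0.2.1 k hlev
        refine ⟨k₁.toNat, s 0 - k₂ • c, hy, ⟨-k₂, by module⟩, ?_, ?_⟩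
        · have e1 : ((k₁.toNat:ℕ):ℤ) = k₁ := Int.toNat_of_nonneg hk₁
          rw [e1, hstep0]
          have e2 : (k:ℤ) • c = k₁ • c + k₂ • c := by rw [← add_smul, hsum]
          rw [e2]; abel
        · rw [show ((k₁.toNat:ℕ):ℤ) = k₁ from Int.toNat_of_nonneg hk₁]
          exact hx
    obtain ⟨k', w, hwmem, hwμ, hwe, htail0⟩ := key
    obtain ⟨s'', hstep'', hpart'', hend''⟩ := ih (fun i => r (i+1)) (fun t => s (t+1)) k'
      (fun i hi => hr (i+1) (by omega)) (fun t ht => hs (t+1) (by omega)) hend hendc htail0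
    refine ⟨fun t => if t = 0 then w else s'' (t-1), fun t ht => ?_, fun i hi => ?_, ?_⟩
    · rcases Nat.eq_zero_or_pos t with h0 | h1
      · subst h0; simpa using ⟨hwmem, hwμ⟩
      · have := hstep'' (t-1) (by omega)
        have et : t - 1 + 1 = t := by omega
        rw [et] at this
        simpa [Nat.pos_iff_ne_zero.1 h1] using this
    · rcases Nat.eq_zero_or_pos i with h0 | h1
      · subst h0; simpa using hz
      · obtain ⟨i', rfl⟩ : ∃ i', i = i' + 1 := ⟨i - 1, by omega⟩
        rw [Finset.sum_range_succ']
        simp only [Nat.succ_ne_zero, if_false, if_true, Nat.add_sub_cancel]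
        have e : r 0 - (k:ℤ) • c - (∑ t ∈ Finset.range i', s'' t + w)
            = r 1 - ((k':ℕ):ℤ) • c - ∑ t ∈ Finset.range i', s'' t := by
          rw [← hwe]; abel
        rw [e]
        exact hpart'' i' (by omega)
    · rw [Finset.sum_range_succ']
      simp only [Nat.succ_ne_zero, if_false, if_true, Nat.add_sub_cancel]
      have e : r 0 - (k:ℤ) • c - (∑ t ∈ Finset.range n, s'' t + w)
          = r 1 - ((k':ℕ):ℤ) • c - ∑ t ∈ Finset.range n, s'' t := by
        rw [← hwe]; abel
      rw [e, hend'']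

end Aux4
section Aux5

variable {V : Type} [NormedAddCommGroup V] [InnerProductSpace ℝ V] (RS : RootSystemData V)

open RootSystemData Finset

/-- Coefficients over `J` of a vector in `span (base \ J)` vanish. -/
theorem RootSystemData.coeffJ {J : Finset V} (hJ : J ⊆ RS.base) (f : V → ℝ)
    (h : ∑ e ∈ RS.base, f e • e ∈ Submodule.span ℝ ((RS.base : Set V) \ (J : Set V)))
    {e₀ : V} (he₀ : e₀ ∈ J) : f e₀ = 0 := by
  classical
  rw [← Finset.coe_sdiff] at h
  rw [Submodule.mem_span_finset] at h
  obtain ⟨g, -, hg⟩ := h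
  set G : V → ℝ := fun v => if v ∈ J then 0 else g v with hG
  have h1 : ∑ e ∈ RS.base, G e • e = ∑ e ∈ RS.base \ J, g e • e := by
    rw [← Finset.sum_subset (Finset.sdiff_subset)]
    · apply Finset.sum_congr rfl
      intro e he
      have : e ∉ J := (Finset.mem_sdiff.1 he).2
      simp [hG, this]
    · intro e he hne
      have : e ∈ J := by
        by_contra hc
        exact hne (Finset.mem_sdiff.2 ⟨he, hc⟩)
      simp [hG, this]
  have h2 : ∑ e ∈ RS.base, (f e - G e) • e = 0 := by
    simp only [sub_smul, Finset.sum_sub_distrib]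
    rw [h1, hg]
    simp
  have h3 : ∑ i ∈ RS.base.attach, (f ↑i - G ↑i) • (↑i : V) = 0 := by
    rw [Finset.sum_attach RS.base (fun v => (f v - G v) • v)]
    exact h2
  have h4 := linearIndependent_iff'.1 RS.base_indep RS.base.attach
    (fun i => f ↑i - G ↑i) h3 ⟨e₀, hJ he₀⟩ (Finset.mem_attach _ _)
  have : G e₀ = 0 := by simp [hG, he₀]
  simpa [this] using h4

theorem RootSystemData.notMemJ {J : Finset V} (hJ : J ⊆ RS.base) {cc : V} (hcb : cc ∈ RS.base)
    (hπ : RS.proj J cc = 0) : cc ∉ J := by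
  classical
  intro hcJ
  have hsp : cc ∈ Submodule.span ℝ ((RS.base : Set V) \ (J : Set V)) :=
    (Submodule.Quotient.mk_eq_zero _).1 hπ
  have hsum : ∑ e ∈ RS.base, (fun v => if v = cc then (1:ℝ) else 0) e • e = cc := by
    have : ∀ e ∈ RS.base, (if e = cc then (1:ℝ) else 0) • e = if e = cc then e else 0 := by
      intro e _; split <;> simp
    rw [Finset.sum_congr rfl this, Finset.sum_ite_eq' RS.base cc (fun v => v), if_pos hcb]
  have := RS.coeffJ hJ _ (hsum ▸ hsp) hcJ
  simp at this

theorem RootSystemData.root_mem_span {x : V} (hx : x ∈ RS.Φ) :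
    x ∈ Submodule.span ℝ (RS.base : Set V) := by
  classical
  have key : ∀ y : V, (∃ c : V → ℕ, y = ∑ e ∈ RS.base, c e • e) →
      y ∈ Submodule.span ℝ (RS.base : Set V) := by
    rintro y ⟨cf, rfl⟩
    apply Submodule.sum_mem
    intro e he
    rw [← Nat.cast_smul_eq_nsmul ℝ]
    exact Submodule.smul_mem _ _ (Submodule.subset_span he)
  rcases RS.base_gen x hx with h | h
  · exact key x h
  · have := key (-x) h
    simpa using (Submodule.neg_mem _ this)

/-- Positivity is preserved by shifting by a multiple of a simple root in `Π \ J`. -/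
theorem RootSystemData.isPosShift {J : Finset V} (hJ : J ⊆ RS.base) {cc st st' : V}
    (hcb : cc ∈ RS.base) (hπc : RS.proj J cc = 0) (hpos : RS.IsPos st)
    (hπs : RS.proj J st ≠ 0) (hst' : st' ∈ RS.Φ) (μ : ℤ) (he : st' = st + μ • cc) :
    RS.IsPos st' := by
  classical
  rcases RS.base_gen st' hst' with h | h
  · exact h
  obtain ⟨mu, hmu⟩ := h
  obtain ⟨lam, hlam⟩ := hpos
  -- find a coordinate of `st` in `J` that is nonzero
  have hex : ∃ e₀ ∈ J, lam e₀ ≠ 0 := by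
    by_contra hno
    push_neg at hno
    apply hπs
    have : st ∈ Submodule.span ℝ ((RS.base : Set V) \ (J : Set V)) := by
      rw [hlam, ← Finset.sum_subset (Finset.sdiff_subset (s := RS.base) (t := J))]
      · apply Submodule.sum_mem
        intro e he
        rw [← Nat.cast_smul_eq_nsmul ℝ]
        apply Submodule.smul_mem
        apply Submodule.subset_span
        rw [← Finset.coe_sdiff]
        exact_mod_cast he
      · intro e he hne
        have heJ : e ∈ J := by
          by_contra hc
          exact hne (Finset.mem_sdiff.2 ⟨he, hc⟩)
        rw [hno e heJ]; simp
    exact (Submodule.Quotient.mk_eq_zero _).2 this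
  obtain ⟨e₀, he₀J, hlam0⟩ := hex
  have hccJ : cc ∉ J := RS.notMemJ hJ hcb hπc
  have hne : e₀ ≠ cc := fun h => hccJ (h ▸ he₀J)
  -- the total combination sums to zero
  set F : V → ℝ := fun v => (lam v : ℝ) + (mu v : ℝ) + (if v = cc then (μ:ℝ) else 0) with hF
  have hzero : ∑ e ∈ RS.base, F e • e = 0 := by
    have e1 : ∑ e ∈ RS.base, ((lam e : ℝ)) • e = st := by
      rw [hlam]
      apply Finset.sum_congr rfl
      intro e _
      rw [Nat.cast_smul_eq_nsmul]
    have e2 : ∑ e ∈ RS.base, ((mu e : ℝ)) • e = -st' := by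
      rw [hmu]
      apply Finset.sum_congr rfl
      intro e _
      rw [Nat.cast_smul_eq_nsmul]
    have e3 : ∑ e ∈ RS.base, (if e = cc then (μ:ℝ) else 0) • e = μ • cc := by
      have : ∀ e ∈ RS.base, (if e = cc then (μ:ℝ) else 0) • e
          = if e = cc then (μ:ℝ) • e else 0 := by
        intro e _; split <;> simp
      rw [Finset.sum_congr rfl this, Finset.sum_ite_eq' RS.base cc (fun v => (μ:ℝ) • v),
        if_pos hcb, Int.cast_smul_eq_zsmul]
    simp only [hF, add_smul, Finset.sum_add_distrib]
    rw [e1, e2, e3, he]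
    abel
  have hF0 : F e₀ = 0 := by
    apply RS.coeffJ hJ F _ he₀J
    rw [hzero]; exact Submodule.zero_mem _
  rw [hF] at hF0
  simp only [hne, if_neg, if_false] at hF0
  have h1 : (1:ℝ) ≤ (lam e₀ : ℝ) := by exact_mod_cast Nat.one_le_iff_ne_zero.2 hlam0
  have h2 : (0:ℝ) ≤ (mu e₀ : ℝ) := by positivity
  linarith

end Aux5
section Aux6

variable {V : Type} [NormedAddCommGroup V] [InnerProductSpace ℝ V] (RS : RootSystemData V)

open RootSystemData Finset

/-- The conclusion of the main theorem, as a predicate of the starting root. -/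
def RootSystemData.Good (J : Finset V) (n : ℕ) (a : ℕ → V) (b : V) (x : V) : Prop :=
  ∃ a' : ℕ → V,
    (∀ t < n, a' t ∈ RS.Φ ∧ RS.IsPos (a' t) ∧ RS.proj J (a' t) = RS.proj J (a t)) ∧
    x - ∑ t ∈ Finset.range n, a' t = b ∧
    ∀ i ≤ n, x - ∑ t ∈ Finset.range i, a' t ∈ RS.Φ

theorem RootSystemData.shiftGood {J : Finset V} (hJ : J ⊆ RS.base) {n : ℕ} {a : ℕ → V} {b : V}
    (ha : ∀ t < n, RS.proj J (a t) ≠ 0) (hbnz : RS.proj J b ≠ 0)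
    (hbmin : RS.IsMinimalIn {x | x ∈ RS.Φ ∧ RS.proj J x = RS.proj J b} b)
    {x cc : V} (hcb : cc ∈ RS.base) (hπc : RS.proj J cc = 0)
    (hx : RS.Good J n a b x) (hxc : x - cc ∈ RS.Φ) : RS.Good J n a b (x - cc) := by
  classical
  obtain ⟨a', hstep, hendp, hparts⟩ := hx
  have hcc : cc ∈ RS.Φ := RS.base_sub hcb
  set r : ℕ → V := fun i => x - ∑ t ∈ Finset.range i, a' t with hrdef
  have hr0 : r 0 = x := by simp [hrdef]
  have hrn : r n = b := hendp
  obtain ⟨s', hs'step, hs'part, hs'end⟩ := RS.pathshift hcc n r a' 1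
    (fun i hi => hparts i hi)
    (fun t ht => ⟨(hstep t ht).1, fun μ hμ => by
        apply ha t ht
        rw [← (hstep t ht).2.2, hμ, map_zsmul, hπc, smul_zero],
      by simp [hrdef, Finset.sum_range_succ]; abel⟩)
    (by
      rw [hrn]
      intro hmem
      exact hbmin.2 cc hcb ⟨hmem, by rw [map_sub, hπc, sub_zero]⟩)
    (by
      rw [hrn]
      intro h
      exact hbnz (by rw [h, hπc]))
    (by
      have : r 0 - ((1:ℕ):ℤ) • cc = x - cc := by rw [hr0]; push_cast; module
      rw [this]; exact hxc)
  have hz : r 0 - ((1:ℕ):ℤ) • cc = x - cc := by rw [hr0]; push_cast; module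
  refine ⟨s', fun t ht => ?_, ?_, fun i hi => ?_⟩
  · obtain ⟨hmem, μ, hμ⟩ := hs'step t ht
    refine ⟨hmem, RS.isPosShift hJ hcb hπc (hstep t ht).2.1
      (by rw [(hstep t ht).2.2]; exact ha t ht) hmem μ hμ, ?_⟩
    rw [hμ, map_add, map_zsmul, hπc, smul_zero, add_zero, (hstep t ht).2.2]
  · rw [← hrn, ← hs'end, hz]
  · rw [← hz]; exact hs'part i hi

theorem RootSystemData.indGood {J : Finset V} (hJ : J ⊆ RS.base) {n : ℕ} {a : ℕ → V} {b : V}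
    (ha : ∀ t < n, RS.proj J (a t) ≠ 0) (hbnz : RS.proj J b ≠ 0)
    (hbmin : RS.IsMinimalIn {x | x ∈ RS.Φ ∧ RS.proj J x = RS.proj J b} b) :
    ∀ m : ℕ, ∀ x y : V, ∀ κ : V → ℕ, x ∈ RS.Φ → y ∈ RS.Φ → RS.proj J x ≠ 0 →
    RS.Good J n a b x → x - y = ∑ e ∈ RS.base, κ e • e → (∀ e ∈ J, κ e = 0) →
    ∑ e ∈ RS.base, κ e = m → RS.Good J n a b y := by
  classical
  intro m
  induction m using Nat.strong_induction_on with
  | _ m IH =>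
  intro x y κ hx hy hπx hgood hrep hκJ hκm
  by_cases hxy : x = y
  · exact hxy ▸ hgood
  have hd0 : x - y ≠ 0 := sub_ne_zero.2 hxy
  have hdd : 0 < ⟪x - y, x - y⟫ := inner_self_pos' hd0
  have hsum : ⟪x - y, x - y⟫ = ∑ e ∈ RS.base, (κ e : ℝ) * ⟪e, x - y⟫ := by
    nth_rewrite 1 [hrep]
    rw [sum_inner]
    apply Finset.sum_congr rfl
    intro e _
    rw [← Nat.cast_smul_eq_nsmul ℝ, real_inner_smul_left]
  have hex : ∃ e ∈ RS.base, 0 < (κ e : ℝ) * ⟪e, x - y⟫ := by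
    by_contra hno
    push_neg at hno
    have : ∑ e ∈ RS.base, (κ e : ℝ) * ⟪e, x - y⟫ ≤ 0 := Finset.sum_nonpos hno
    rw [← hsum] at this
    linarith
  obtain ⟨e, he, hepos⟩ := hex
  have hκe : κ e ≠ 0 := by
    intro h
    rw [h] at hepos
    simp at hepos
  have hed : 0 < ⟪e, x - y⟫ := by
    rcases lt_or_ge 0 ⟪e, x - y⟫ with h | h
    · exact h
    · exfalso
      have h1 : (0:ℝ) ≤ (κ e : ℝ) := by positivity
      nlinarith
  have heJ : e ∉ J := fun h => hκe (hκJ e h)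
  have hπe : RS.proj J e = 0 := by
    apply (Submodule.Quotient.mk_eq_zero _).2
    exact Submodule.subset_span ⟨by exact_mod_cast he, by exact_mod_cast heJ⟩
  have hee : e ∈ RS.Φ := RS.base_sub he
  -- m ≥ 1
  have hm1 : 1 ≤ m := by
    have h1 : 1 ≤ κ e := Nat.one_le_iff_ne_zero.2 hκe
    have h2 : κ e ≤ ∑ v ∈ RS.base, κ v := Finset.single_le_sum (fun v _ => Nat.zero_le _) he
    omega
  -- the decremented coefficient function
  set κ' : V → ℕ := fun v => if v = e then κ v - 1 else κ v with hκ'def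
  have hID : ∑ v ∈ RS.base, κ' v • v = (∑ v ∈ RS.base, κ v • v) - e := by
    rw [← Finset.sum_erase_add RS.base _ he, ← Finset.sum_erase_add RS.base (fun v => κ v • v) he]
    have h1 : ∑ v ∈ RS.base.erase e, κ' v • v = ∑ v ∈ RS.base.erase e, κ v • v := by
      apply Finset.sum_congr rfl
      intro v hv
      have : v ≠ e := Finset.ne_of_mem_erase hv
      simp [hκ'def, this]
    rw [h1]
    have h2 : κ' e = κ e - 1 := by simp [hκ'def]
    rw [h2]
    have h4 : κ e • e = (κ e - 1) • e + (1:ℕ) • e := by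
      rw [← add_nsmul]
      congr 1
      omega
    rw [h4, one_nsmul]
    abel
  have hκ'J : ∀ v ∈ J, κ' v = 0 := by
    intro v hv
    have : v ≠ e := fun h => heJ (h ▸ hv)
    simp [hκ'def, this, hκJ v hv]
  have hκ'm : ∑ v ∈ RS.base, κ' v = m - 1 := by
    rw [← Finset.sum_erase_add RS.base _ he]
    have h1 : ∑ v ∈ RS.base.erase e, κ' v = ∑ v ∈ RS.base.erase e, κ v := by
      apply Finset.sum_congr rfl
      intro v hv
      simp [hκ'def, Finset.ne_of_mem_erase hv]
    rw [h1, show κ' e = κ e - 1 from by simp [hκ'def]]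
    rw [← Finset.sum_erase_add RS.base κ he] at hκm
    omega
  have hπxy : RS.proj J y = RS.proj J x := by
    have hmem : x - y ∈ Submodule.span ℝ ((RS.base : Set V) \ (J : Set V)) := by
      rw [hrep, ← Finset.sum_subset (Finset.sdiff_subset (s := RS.base) (t := J))]
      · apply Submodule.sum_mem
        intro v hv
        rw [← Nat.cast_smul_eq_nsmul ℝ]
        apply Submodule.smul_mem
        apply Submodule.subset_span
        rw [← Finset.coe_sdiff]
        exact_mod_cast hv
      · intro v hv hvn
        have : v ∈ J := by
          by_contra hcon
          exact hvn (Finset.mem_sdiff.2 ⟨hv, hcon⟩)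
        rw [hκJ v this]; simp
    have : RS.proj J (x - y) = 0 := (Submodule.Quotient.mk_eq_zero _).2 hmem
    rw [map_sub, sub_eq_zero] at this
    exact this.symm
  rw [inner_sub_right] at hed
  rcases lt_or_ge 0 ⟪e, x⟫ with hpx | hpx
  · -- descend from the top
    have hxe : x ≠ e := fun h => hπx (h ▸ hπe)
    have hxsub : x - e ∈ RS.Φ :=
      RS.sub_mem_of_inner_pos hx hee hxe (by rwa [real_inner_comm x e] at hpx)
    have hgood' : RS.Good J n a b (x - e) := RS.shiftGood hJ ha hbnz hbmin he hπe hgood hxsub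
    refine IH (m - 1) (by omega) (x - e) y κ' hxsub hy ?_ hgood' ?_ hκ'J hκ'm
    · rw [map_sub, hπe, sub_zero]; exact hπx
    · rw [hID, ← hrep]; abel
  · -- raise the bottom
    have hpy : ⟪e, y⟫ < 0 := by linarith
    have hye : y ≠ -e := by
      intro h
      apply hπx
      rw [← hπxy, h, map_neg, hπe, neg_zero]
    have hysub : y + e ∈ RS.Φ := by
      have := RS.sub_mem_of_inner_pos hy (RS.neg_mem e hee) (by simpa using hye)
        (by rw [inner_neg_right, real_inner_comm]; linarith)
      simpa [sub_neg_eq_add] using this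
    have hgood' : RS.Good J n a b (y + e) :=
      IH (m - 1) (by omega) x (y + e) κ' hx hysub hπx hgood
        (by rw [hID, ← hrep]; abel) hκ'J hκ'm
    have := RS.shiftGood hJ ha hbnz hbmin he hπe hgood' (by simpa using hy)
    simpa using this

end Aux6
section Aux7

variable {V : Type} [NormedAddCommGroup V] [InnerProductSpace ℝ V] (RS : RootSystemData V)

open RootSystemData Finset

theorem RootSystemData.proj_highest_ne_zero {J : Finset V} (hJ : J ⊆ RS.base) {atil b : V}
    (hatil : RS.IsHighest atil) (hbΦ : b ∈ RS.Φ) (hbnz : RS.proj J b ≠ 0) :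
    RS.proj J atil ≠ 0 := by
  classical
  intro h0
  rcases J.eq_empty_or_nonempty with hJe | ⟨e₀, he₀⟩
  · apply hbnz
    apply (Submodule.Quotient.mk_eq_zero _).2
    have := RS.root_mem_span hbΦ
    subst hJe
    simpa using this
  · have he₀b : e₀ ∈ RS.base := hJ he₀
    obtain ⟨κ, hκ⟩ := hatil.2 e₀ (RS.base_sub he₀b)
    have hsp : atil ∈ Submodule.span ℝ ((RS.base : Set V) \ (J : Set V)) :=
      (Submodule.Quotient.mk_eq_zero _).1 h0
    have hsum : ∑ v ∈ RS.base, (fun v => (κ v : ℝ) + (if v = e₀ then (1:ℝ) else 0)) v • v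
        = atil := by
      simp only [add_smul, Finset.sum_add_distrib]
      have e1 : ∑ v ∈ RS.base, ((κ v : ℝ)) • v = atil - e₀ := by
        rw [hκ]
        apply Finset.sum_congr rfl
        intro v _
        rw [Nat.cast_smul_eq_nsmul]
      have e2 : ∑ v ∈ RS.base, (if v = e₀ then (1:ℝ) else 0) • v = e₀ := by
        have : ∀ v ∈ RS.base, (if v = e₀ then (1:ℝ) else 0) • v = if v = e₀ then v else 0 := by
          intro v _; split <;> simp
        rw [Finset.sum_congr rfl this, Finset.sum_ite_eq' RS.base e₀ (fun v => v), if_pos he₀b]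
      rw [e1, e2]
      abel
    have := RS.coeffJ hJ _ (hsum ▸ hsp) he₀
    have h1 : (0:ℝ) ≤ (κ e₀ : ℝ) := by positivity
    norm_num at this
    linarith

end Aux7

open RootSystemData in
theorem stmt10 {V : Type} [NormedAddCommGroup V] [InnerProductSpace ℝ V]
    (RS : RootSystemData V) (hirr : RS.Irred)
    (J : Finset V) (hJ : J ⊆ RS.base)
    (atil : V) (hatil : RS.IsHighest atil)
    (n : ℕ) (a : ℕ → V)
    (ha : ∀ t < n, a t ∈ RS.Φ ∧ RS.IsPos (a t) ∧ RS.proj J (a t) ≠ 0)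
    (hpart : ∀ i ≤ n, atil - ∑ t ∈ Finset.range i, a t ∈ RS.Φ)
    (b : V) (hb : b = atil - ∑ t ∈ Finset.range n, a t)
    (hbnz : RS.proj J b ≠ 0)
    (hbmin : RS.IsMinimalIn {x | x ∈ RS.Φ ∧ RS.proj J x = RS.proj J b} b)
    (a₀ : V) (ha₀ : a₀ ∈ RS.Φ) (hπ : RS.proj J a₀ = RS.proj J atil)
    (hcomp : ∃ S : Set V, RS.IsComponent S ∧ a₀ ∈ S ∧ atil ∈ S) :
    ∃ a' : ℕ → V,
      (∀ t < n, a' t ∈ RS.Φ ∧ RS.IsPos (a' t) ∧ RS.proj J (a' t) = RS.proj J (a t)) ∧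
      a₀ - ∑ t ∈ Finset.range n, a' t = b ∧
      ∀ i ≤ n, a₀ - ∑ t ∈ Finset.range i, a' t ∈ RS.Φ := by
  classical
  have hbΦ : b ∈ RS.Φ := hb ▸ hpart n (le_refl _)
  have hπa : ∀ t < n, RS.proj J (a t) ≠ 0 := fun t ht => (ha t ht).2.2
  have hπatil : RS.proj J atil ≠ 0 := RS.proj_highest_ne_zero hJ hatil hbΦ hbnz
  have hgood : RS.Good J n a b atil :=
    ⟨a, fun t ht => ⟨(ha t ht).1, (ha t ht).2.1, rfl⟩, hb.symm, hpart⟩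
  obtain ⟨κ, hκ⟩ := hatil.2 a₀ ha₀
  have hκJ : ∀ e ∈ J, κ e = 0 := by
    intro e he
    have hq : RS.proj J (atil - a₀) = 0 := by rw [map_sub, hπ, sub_self]
    have hsp : atil - a₀ ∈ Submodule.span ℝ ((RS.base : Set V) \ (J : Set V)) :=
      (Submodule.Quotient.mk_eq_zero _).1 hq
    have hsum : ∑ v ∈ RS.base, (fun v => (κ v : ℝ)) v • v = atil - a₀ := by
      rw [hκ]
      apply Finset.sum_congr rfl
      intro v _
      rw [Nat.cast_smul_eq_nsmul]
    have := RS.coeffJ hJ _ (hsum ▸ hsp) he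
    exact_mod_cast this
  exact RS.indGood hJ hπa hbnz hbmin (∑ e ∈ RS.base, κ e) atil a₀ κ hatil.1 ha₀ hπatil
    hgood hκ hκJ rfl
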